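/- The surjective Turull induction IndT^C_{s,D}(S) : C → k-Alg, defined on objects by IndT(x') = M_S(x) where s(x)=x', and on a morphism g : x' → y' by IndT(g)(m) = S(f)(m) for any f ∈ Mor D with s(f)=g, is a well-defined covariant functor into k-algebras, i.e., each IndT(g) : M_S(x) → M_S(y) is a unital k-algebra homomorphism and the assignment is functorial. -/

import Mathlib

open CategoryTheory

variable (k : Type) [Field k]

variable (D : Type) [SmallCategory D] [Fintype D] [DecidableEq D]
  [∀ x y : D, Fintype (x ⟶ y)] [∀ x y : D, DecidableEq (x ⟶ y)]
variable (C : Type) [SmallCategory C] [Fintype C] [DecidableEq C]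
  [∀ x y : C, Fintype (x ⟶ y)] [∀ x y : C, DecidableEq (x ⟶ y)]

/-- The set of morphisms of a category, as a sigma type. -/
abbrev Mor (C : Type) [SmallCategory C] : Type := Σ x y : C, x ⟶ y

/-- Composition of composable morphisms: `compMor g f h = g ∘ f` when `d(g) = c(f)`. -/
def compMor {C : Type} [SmallCategory C] (g f : Mor C) (h : g.1 = f.2.1) : Mor C :=
  ⟨f.1, g.2.1, f.2.2 ≫ eqToHom h.symm ≫ g.2.2⟩

/-- The action of a functor `s : D ⥤ C` on the set of morphisms. -/
def sMor {D C : Type} [SmallCategory D] [SmallCategory C] (s : D ⥤ C) (f : Mor D) : Mor C :=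
  ⟨s.obj f.1, s.obj f.2.1, s.map f.2.2⟩

variable (S : D ⥤ AlgCat k) (s : D ⥤ C)

/-- `M_S(x)`: the set of `m ∈ S(x)` such that `S(f)(m) = S(g)(m)` for all `f` with
`d(f) = x` and all `g` with `s(g) = s(f)` (the equality of values being recorded as an
equality in `Σ w, S(w)`, since `f` and `g` may a priori have different codomains). -/
def MS (x : D) : Set (S.obj x) :=
  {m | ∀ (y z : D) (f : x ⟶ y) (g : x ⟶ z),
    sMor s ⟨x, y, f⟩ = sMor s ⟨x, z, g⟩ →
    (⟨y, S.map f m⟩ : Σ w : D, S.obj w) = ⟨z, S.map g m⟩}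

/-- the surjective Turull induction `IndT^C_{s,D}(S) : C → k-Alg`, with
`IndT(x') = M_S(x)` for `s(x) = x'` and `IndT(g)(m) = S(f)(m)` for any lift `f` of `g`,
is a well-defined covariant functor into unital `k`-algebras: the maps are independent
of the chosen lift, carry `M_S` into `M_S`, are unital `k`-algebra homomorphisms, and
are functorial. -/
theorem IndT_is_precosheaf (hinj : Function.Injective s.obj)
    (hsurj : Function.Surjective (sMor s)) :
    -- independence of the lift
    (∀ (x y z : D) (f₁ : x ⟶ y) (f₂ : x ⟶ z),
      sMor s ⟨x, y, f₁⟩ = sMor s ⟨x, z, f₂⟩ →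
      ∀ m ∈ MS k D C S s x,
        (⟨y, S.map f₁ m⟩ : Σ w : D, S.obj w) = ⟨z, S.map f₂ m⟩) ∧
    -- each `IndT(g) : M_S(x) → M_S(y)` is well defined ...
    (∀ (x y : D) (f : x ⟶ y), ∀ m ∈ MS k D C S s x, S.map f m ∈ MS k D C S s y) ∧
    -- ... and is a unital `k`-algebra homomorphism
    (∀ (x y : D) (f : x ⟶ y),
      S.map f (1 : S.obj x) = 1 ∧
      (∀ m m' : S.obj x, S.map f (m * m') = S.map f m * S.map f m') ∧
      (∀ (c : k) (m m' : S.obj x), S.map f (c • m + m') = c • S.map f m + S.map f m')) ∧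
    -- functoriality
    (∀ (x : D) (m : S.obj x), S.map (𝟙 x) m = m) ∧
    (∀ (x y z : D) (f : x ⟶ y) (g : y ⟶ z) (m : S.obj x),
      S.map (f ≫ g) m = S.map g (S.map f m)) := by
  refine ⟨fun x y z f₁ f₂ h m hm => hm y z f₁ f₂ h, ?_, ?_, ?_, ?_⟩
  · intro x y f m hm z w g h hgw
    have h1 : s.obj z = s.obj w := congrArg (fun t => t.2.1) hgw
    have hz : z = w := hinj h1
    subst hz
    have hmap : s.map g = s.map h := by
      simpa [sMor] using eq_of_heq (Sigma.mk.inj_iff.mp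
        (eq_of_heq (Sigma.mk.inj_iff.mp hgw).2)).2
    have key := hm z z (f ≫ g) (f ≫ h) (by simp [sMor, s.map_comp, hmap])
    have := eq_of_heq (Sigma.mk.inj_iff.mp key).2
    simpa [S.map_comp] using this
  · intro x y f
    exact ⟨map_one (S.map f).hom, fun m m' => map_mul (S.map f).hom m m',
      fun c m m' => by rw [map_add (S.map f).hom, map_smul (S.map f).hom]⟩
  · intro x m; simp
  · intro x y z f g m; simp
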